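/- Soundness of the negative abstraction of the same_quad guard of winding_number_edge: let tx, ty, nx, ny and t̃x, t̃y, ñx, ñy be real numbers and etx, ety, enx, eny be round-off error bounds with |t̃x − tx| ≤ etx, |t̃y − ty| ≤ ety, |ñx − nx| ≤ enx, |ñy − ny| ≤ eny. Define same_quad(a,b,c,d) := (a ≥ 0 ∧ b ≥ 0 ∧ c ≥ 0 ∧ d ≥ 0) ∨ (a ≤ 0 ∧ b ≥ 0 ∧ c ≤ 0 ∧ d ≥ 0) ∨ (a ≥ 0 ∧ b ≤ 0 ∧ c ≥ 0 ∧ d ≤ 0) ∨ (a ≤ 0 ∧ b ≤ 0 ∧ c ≤ 0 ∧ d ≤ 0). If (t̃x < −etx ∨ t̃y < −ety ∨ ñx < −enx ∨ ñy < −eny) ∧ (t̃x > etx ∨ t̃y < −ety ∨ ñx > enx ∨ ñy < −eny) ∧ (t̃x < −etx ∨ t̃y > ety ∨ ñx < −enx ∨ ñy > eny) ∧ (t̃x > etx ∨ t̃y > ety ∨ ñx > enx ∨ ñy > eny), then same_quad(t̃x, t̃y, ñx, ñy) is false and same_quad(tx, ty, nx, ny) is false. -/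
import Mathlib

/-- The same_quad guard of winding_number_edge: the two translated vertices
lie in the same quadrant. -/
def same_quad (a b c d : ℝ) : Prop :=
  (a ≥ 0 ∧ b ≥ 0 ∧ c ≥ 0 ∧ d ≥ 0) ∨ (a ≤ 0 ∧ b ≥ 0 ∧ c ≤ 0 ∧ d ≥ 0) ∨
  (a ≥ 0 ∧ b ≤ 0 ∧ c ≥ 0 ∧ d ≤ 0) ∨ (a ≤ 0 ∧ b ≤ 0 ∧ c ≤ 0 ∧ d ≤ 0)

/-- Soundness of the negative abstraction of the same_quad guard. -/
theorem same_quad_beta_neg_sound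
    (tx ty nx ny ftx fty fnx fny etx ety enx eny : ℝ)
    (htx : |ftx - tx| ≤ etx) (hty : |fty - ty| ≤ ety)
    (hnx : |fnx - nx| ≤ enx) (hny : |fny - ny| ≤ eny)
    (h : (ftx < -etx ∨ fty < -ety ∨ fnx < -enx ∨ fny < -eny) ∧
         (ftx > etx ∨ fty < -ety ∨ fnx > enx ∨ fny < -eny) ∧
         (ftx < -etx ∨ fty > ety ∨ fnx < -enx ∨ fny > eny) ∧
         (ftx > etx ∨ fty > ety ∨ fnx > enx ∨ fny > eny)) :
    ¬ same_quad ftx fty fnx fny ∧ ¬ same_quad tx ty nx ny := by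
  obtain ⟨h1, h2, h3, h4⟩ := h
  have etx0 : 0 ≤ etx := le_trans (abs_nonneg _) htx
  have ety0 : 0 ≤ ety := le_trans (abs_nonneg _) hty
  have enx0 : 0 ≤ enx := le_trans (abs_nonneg _) hnx
  have eny0 : 0 ≤ eny := le_trans (abs_nonneg _) hny
  rw [abs_le] at htx hty hnx hny
  constructor <;> rintro (⟨a,b,c,d⟩|⟨a,b,c,d⟩|⟨a,b,c,d⟩|⟨a,b,c,d⟩)
  · rcases h1 with p|p|p|p <;> linarith
  · rcases h2 with p|p|p|p <;> linarith
  · rcases h3 with p|p|p|p <;> linarith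
  · rcases h4 with p|p|p|p <;> linarith
  · rcases h1 with p|p|p|p <;> linarith [htx.1, htx.2, hty.1, hty.2, hnx.1, hnx.2, hny.1, hny.2]
  · rcases h2 with p|p|p|p <;> linarith [htx.1, htx.2, hty.1, hty.2, hnx.1, hnx.2, hny.1, hny.2]
  · rcases h3 with p|p|p|p <;> linarith [htx.1, htx.2, hty.1, hty.2, hnx.1, hnx.2, hny.1, hny.2]
  · rcases h4 with p|p|p|p <;> linarith [htx.1, htx.2, hty.1, hty.2, hnx.1, hnx.2, hny.1, hny.2]
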